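/- Let M ≥ 1 and α ≥ 1 be integers and let f be a real polynomial of degree at most M. Then ∫₀^π f(cos θ) sin^α θ dθ = Σ_{u=0}^{M} χ_u f(cos(uπ/M)), where χ_u = ε_u · ω_u, with ε_0 = ε_M = 1/2 and ε_u = 1 for u = 1,…,M−1, and ω_u = (π·α!/(2^{α−1} M)) · Σ_{μ=0}^{⌊M/2⌋} ε_{2μ} (−1)^μ cos(2μuπ/M) / (Γ(α/2 − μ + 1) Γ(α/2 + μ + 1)), where a summand is understood to be 0 whenever α/2 − μ + 1 is a nonpositive integer. -/

import Mathlib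

open Real Finset

/-- The Clenshaw–Curtis type weights `ε_u` relative to `M`:
`ε_0 = ε_M = 1/2` and `ε_u = 1` for `0 < u < M`. -/
noncomputable def ccEps (M u : ℕ) : ℝ := if u = 0 ∨ u = M then 1 / 2 else 1

/-- The quadrature weights `ω_u` for the generalized Clenshaw–Curtis quadrature with
parameter `α` and `M + 1` nodes.  Summands with `α/2 - μ + 1` a nonpositive integer are
automatically `0` since `Real.Gamma` vanishes at nonpositive integers. -/
noncomputable def ccOmega (M α u : ℕ) : ℝ :=
  π * (Nat.factorial α) / (2 ^ (α - 1) * M) *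
    ∑ μ ∈ Finset.range (M / 2 + 1),
      ccEps M (2 * μ) * (-1 : ℝ) ^ μ * Real.cos (2 * μ * u * π / M) /
        (Real.Gamma ((α : ℝ) / 2 - μ + 1) * Real.Gamma ((α : ℝ) / 2 + μ + 1))



lemma sum_eps (M : ℕ) (hM : 1 ≤ M) : ∑ u ∈ Finset.range (M+1), ccEps M u = M := by
  induction M with
  | zero => omega
  | succ n ih =>
    rcases Nat.eq_or_lt_of_le hM with h | h
    · simp [← h, ccEps, Finset.sum_range_succ]; norm_num
    · have hn : 1 ≤ n := by omega
      have key : ∀ u ∈ Finset.range (n+1), ccEps (n+1) u = ccEps n u + (if u = n then 1/2 else 0) := by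
        intro u hu
        simp only [Finset.mem_range] at hu
        rcases eq_or_ne u n with rfl | hne
        · simp [ccEps, show u ≠ 0 by omega, show u ≠ u + 1 by omega]
          norm_num
        · have h2 : u ≠ n + 1 := by omega
          simp [ccEps, hne, h2]
      rw [Finset.sum_range_succ, Finset.sum_congr rfl key, Finset.sum_add_distrib, ih hn]
      simp [ccEps, Finset.sum_ite_eq' (Finset.range (n+1)) n, Finset.mem_range]
      ring

lemma eps_sum_split (M : ℕ) (hM : 1 ≤ M) (f : ℕ → ℝ) :
    ∑ u ∈ Finset.range (M+1), ccEps M u * f u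
      = (∑ u ∈ Finset.range (M+1), f u) - f 0 / 2 - f M / 2 := by
  have hne : (0:ℕ) ≠ M := by omega
  have h : ∑ u ∈ Finset.range (M+1), (ccEps M u * f u - f u)
      = ∑ u ∈ ({0, M} : Finset ℕ), (ccEps M u * f u - f u) := by
    symm
    apply Finset.sum_subset
    · intro u hu
      simp only [Finset.mem_insert, Finset.mem_singleton] at hu
      simp only [Finset.mem_range]; omega
    · intro u _ hu
      simp only [Finset.mem_insert, Finset.mem_singleton, not_or] at hu
      simp [ccEps, hu.1, hu.2]
  rw [Finset.sum_pair hne] at h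
  rw [Finset.sum_sub_distrib] at h
  have e0 : ccEps M 0 = 1/2 := by simp [ccEps]
  have eM : ccEps M M = 1/2 := by simp [ccEps]
  rw [e0, eM] at h
  linarith [h]

lemma eps_cos_sum (M : ℕ) (hM : 1 ≤ M) (k : ℤ) :
    ∑ u ∈ Finset.range (M+1), ccEps M u * Real.cos (k * u * π / M) =
      if (2*(M:ℤ)) ∣ k then (M:ℝ) else 0 := by
  have hM0 : (M:ℝ) ≠ 0 := Nat.cast_ne_zero.mpr (by omega)
  by_cases hdvd : (2*(M:ℤ)) ∣ k
  · obtain ⟨j, rfl⟩ := hdvd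
    have hd : (2*(M:ℤ)) ∣ 2*(M:ℤ)*j := ⟨j, rfl⟩
    rw [if_pos hd]
    have hc : ∀ u ∈ Finset.range (M+1),
        ccEps M u * Real.cos (((2*(M:ℤ)*j : ℤ) : ℝ) * u * π / M) = ccEps M u := by
      intro u _
      have e : ((2*(M:ℤ)*j : ℤ) : ℝ) * u * π / M = ((j * u : ℤ) : ℝ) * (2 * π) := by
        push_cast; field_simp
      rw [e, Real.cos_int_mul_two_pi, mul_one]
    rw [Finset.sum_congr rfl hc, sum_eps M hM]
  · rw [if_neg hdvd]
    set b : ℝ := k * π / (2*M) with hb_def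
    have hπ : (π:ℝ) ≠ 0 := Real.pi_ne_zero
    have hb : Real.sin b ≠ 0 := by
      intro h
      obtain ⟨n, hn⟩ := Real.sin_eq_zero_iff.mp h
      apply hdvd
      refine ⟨n, ?_⟩
      have h1 : (k:ℝ) * π = (n:ℝ) * π * (2*M) := by
        rw [hb_def] at hn
        field_simp at hn
        rw [← hn]; ring
      have h2 : (k:ℝ) = 2*(M:ℝ)*(n:ℝ) := by
        have := mul_right_cancel₀ hπ (by linarith [h1] : (k:ℝ) * π = ((n:ℝ)*(2*M)) * π)
        linarith
      exact_mod_cast h2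
    have harg : ∀ u : ℕ, (k:ℝ) * u * π / M = 2 * u * b := by
      intro u; rw [hb_def]; field_simp
    have T : ∑ u ∈ Finset.range (M+1), Real.cos (2*(u:ℝ)*b) * (2*Real.sin b)
        = Real.sin ((2*((M:ℝ)+1)-1)*b) - Real.sin ((2*(0:ℝ)-1)*b) := by
      have tele := Finset.sum_range_sub (f := fun u : ℕ => Real.sin ((2*(u:ℝ)-1)*b)) (M+1)
      push_cast at tele
      rw [← tele]
      apply Finset.sum_congr rfl
      intro u _
      rw [show (2*((u:ℝ)+1)-1)*b = 2*u*b + b by ring, show (2*(u:ℝ)-1)*b = 2*u*b - b by ring,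
        Real.sin_add, Real.sin_sub]
      ring
    have hsum := eps_sum_split M hM (fun u => Real.cos (2*(u:ℝ)*b))
    have h2Mb : Real.sin (2*(M:ℝ)*b) = 0 := by
      rw [show 2*(M:ℝ)*b = k*π by rw [hb_def]; field_simp]
      exact Real.sin_int_mul_pi k
    have key : (∑ u ∈ Finset.range (M+1), ccEps M u * Real.cos (2*(u:ℝ)*b)) * (2*Real.sin b) = 0 := by
      rw [hsum, sub_mul, sub_mul, Finset.sum_mul, T]
      rw [show (2*((M:ℝ)+1)-1)*b = 2*(M:ℝ)*b + b by ring, Real.sin_add, h2Mb]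
      rw [show (2*((0:ℕ):ℝ)*b) = 0 by push_cast; ring]
      rw [show (2*((0:ℝ))-1)*b = -b by ring, Real.sin_neg, Real.cos_zero]
      ring
    have hS : ∑ u ∈ Finset.range (M+1), ccEps M u * Real.cos (k * u * π / M)
        = ∑ u ∈ Finset.range (M+1), ccEps M u * Real.cos (2*(u:ℝ)*b) := by
      apply Finset.sum_congr rfl
      intro u _
      rw [harg u]
    rw [hS]
    rcases mul_eq_zero.mp key with h | h
    · exact h
    · exact absurd h (by positivity)

noncomputable def ccF (α : ℕ) (m : ℤ) : ℝ :=
  π * (Nat.factorial α) * (-1:ℝ)^m /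
    (2^α * (Real.Gamma ((α:ℝ)/2 - m + 1) * Real.Gamma ((α:ℝ)/2 + m + 1)))

lemma neg_one_zpow_ne (m : ℤ) : ((-1:ℝ))^m ≠ 0 := zpow_ne_zero m (by norm_num)

set_option maxHeartbeats 1000000 in
lemma ccF_step_regular (α : ℕ) (m : ℤ)
    (h1 : ((α:ℝ)/2 - m) ≠ 0) (h2 : ((α:ℝ)/2 - m + 1) ≠ 0)
    (h3 : ((α:ℝ)/2 + m) ≠ 0) (h4 : ((α:ℝ)/2 + m + 1) ≠ 0)
    (hA : Real.Gamma ((α:ℝ)/2 - m) ≠ 0) (hB : Real.Gamma ((α:ℝ)/2 + m) ≠ 0) :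
    ccF (α+2) m = ccF α m / 2 - ccF α (m+1) / 4 - ccF α (m-1) / 4 := by
  have gA1 : Real.Gamma ((α:ℝ)/2 - m + 1) = ((α:ℝ)/2 - m) * Real.Gamma ((α:ℝ)/2 - m) :=
    Real.Gamma_add_one h1
  have gA2 : Real.Gamma ((α:ℝ)/2 - m + 2) =
      ((α:ℝ)/2 - m + 1) * (((α:ℝ)/2 - m) * Real.Gamma ((α:ℝ)/2 - m)) := by
    rw [show (α:ℝ)/2 - m + 2 = ((α:ℝ)/2 - m + 1) + 1 by ring, Real.Gamma_add_one h2, gA1]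
  have gB1 : Real.Gamma ((α:ℝ)/2 + m + 1) = ((α:ℝ)/2 + m) * Real.Gamma ((α:ℝ)/2 + m) :=
    Real.Gamma_add_one h3
  have gB2 : Real.Gamma ((α:ℝ)/2 + m + 2) =
      ((α:ℝ)/2 + m + 1) * (((α:ℝ)/2 + m) * Real.Gamma ((α:ℝ)/2 + m)) := by
    rw [show (α:ℝ)/2 + m + 2 = ((α:ℝ)/2 + m + 1) + 1 by ring, Real.Gamma_add_one h4, gB1]
  have fac : ((α+2).factorial : ℝ) = ((α:ℝ)+2) * (((α:ℝ)+1) * (α.factorial : ℝ)) := by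
    rw [show α + 2 = (α+1)+1 from rfl, Nat.factorial_succ, Nat.factorial_succ]
    push_cast; ring
  simp only [ccF, fac]
  rw [show ((α+2:ℕ):ℝ)/2 - m + 1 = (α:ℝ)/2 - m + 2 by push_cast; ring,
      show ((α+2:ℕ):ℝ)/2 + m + 1 = (α:ℝ)/2 + m + 2 by push_cast; ring,
      show (α:ℝ)/2 - (m+1:ℤ) + 1 = (α:ℝ)/2 - m by push_cast; ring,
      show (α:ℝ)/2 + (m+1:ℤ) + 1 = (α:ℝ)/2 + m + 2 by push_cast; ring,
      show (α:ℝ)/2 - (m-1:ℤ) + 1 = (α:ℝ)/2 - m + 2 by push_cast; ring,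
      show (α:ℝ)/2 + (m-1:ℤ) + 1 = (α:ℝ)/2 + m by push_cast; ring,
      gA2, gB2, gA1, gB1]
  rw [show ((-1:ℝ))^(m+1) = -((-1:ℝ))^m by rw [zpow_add₀ (by norm_num : (-1:ℝ) ≠ 0)]; ring,
      show ((-1:ℝ))^(m-1) = -((-1:ℝ))^m by
        rw [zpow_sub₀ (by norm_num : (-1:ℝ) ≠ 0), zpow_one]; ring]
  have hπ : (π:ℝ) ≠ 0 := Real.pi_ne_zero
  have hfac : (α.factorial : ℝ) ≠ 0 := Nat.cast_ne_zero.mpr α.factorial_ne_zero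
  have h2α : (2:ℝ)^α ≠ 0 := by positivity
  have hσ := neg_one_zpow_ne m
  set x := (α:ℝ)/2 with hx
  rw [show (α:ℝ) = 2*x by rw [hx]; ring]
  set σ := ((-1:ℝ))^m with hσ'
  set A := Real.Gamma (x - m) with hA'
  set B := Real.Gamma (x + m) with hB'
  set Fc := (α.factorial : ℝ) with hFc
  set P2 := (2:ℝ)^α with hP2
  set mr := (m:ℝ) with hmr
  rw [pow_add]
  field_simp
  ring

lemma Gamma_nonpos_int {z : ℤ} (hz : z ≤ 0) : Real.Gamma (z:ℝ) = 0 := by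
  obtain ⟨n, rfl⟩ : ∃ n:ℕ, z = -(n:ℤ) := ⟨(-z).toNat, by omega⟩
  push_cast
  exact Real.Gamma_neg_nat_eq_zero n

lemma Gamma_half_int_ne_zero (z : ℤ) : Real.Gamma ((z:ℝ) + 1/2) ≠ 0 := by
  apply Real.Gamma_ne_zero
  intro n h
  have h1 : (2*z + 1 : ℝ) = -(2*(n:ℝ)) := by linarith [h]
  have h2 : (2*z + 1 : ℤ) = -(2*(n:ℤ)) := by exact_mod_cast h1
  omega

lemma half_int_ne_zero (z : ℤ) : ((z:ℝ) + 1/2) ≠ 0 := by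
  intro h
  have h1 : (2*z + 1 : ℝ) = 0 := by linarith
  have h2 : (2*z + 1 : ℤ) = 0 := by exact_mod_cast h1
  omega

lemma ccF_zero_left {α : ℕ} {m : ℤ} (h : Real.Gamma ((α:ℝ)/2 - m + 1) = 0) : ccF α m = 0 := by
  simp [ccF, h]

lemma Gamma_nat_fac (k : ℕ) : Real.Gamma ((k:ℝ)+1) = k.factorial := Real.Gamma_nat_eq_factorial k

lemma ccF_step_case_eq (p : ℕ) :
    ccF (2*(p+1)+2) ((p:ℤ)+1) = ccF (2*(p+1)) ((p:ℤ)+1) / 2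
      - ccF (2*(p+1)) (((p:ℤ)+1)+1) / 4 - ccF (2*(p+1)) (((p:ℤ)+1)-1) / 4 := by
  have hfac3 : ((2*p+3).factorial : ℝ) ≠ 0 := Nat.cast_ne_zero.mpr (Nat.factorial_ne_zero _)
  have hfac2 : ((2*p+2).factorial : ℝ) ≠ 0 := Nat.cast_ne_zero.mpr (Nat.factorial_ne_zero _)
  have hfac1 : ((2*p+1).factorial : ℝ) ≠ 0 := Nat.cast_ne_zero.mpr (Nat.factorial_ne_zero _)
  simp only [ccF]
  push_cast
  rw [show (2*((p:ℝ)+1)+2)/2 - ((p:ℝ)+1) + 1 = 2 by ring,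
      show (2*((p:ℝ)+1)+2)/2 + ((p:ℝ)+1) + 1 = ((2*p+3:ℕ):ℝ)+1 by push_cast; ring,
      show (2*((p:ℝ)+1))/2 - ((p:ℝ)+1) + 1 = 1 by ring,
      show (2*((p:ℝ)+1))/2 + ((p:ℝ)+1) + 1 = ((2*p+2:ℕ):ℝ)+1 by push_cast; ring,
      show (2*((p:ℝ)+1))/2 - ((p:ℝ)+1+1) + 1 = 0 by ring,
      show (2*((p:ℝ)+1))/2 - ((p:ℝ)+1-1) + 1 = 2 by ring,
      show (2*((p:ℝ)+1))/2 + ((p:ℝ)+1-1) + 1 = ((2*p+1:ℕ):ℝ)+1 by push_cast; ring,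
      Real.Gamma_two, Real.Gamma_one, Real.Gamma_zero, Gamma_nat_fac, Gamma_nat_fac, Gamma_nat_fac]
  rw [show ((p:ℤ)+1)+1 = (p:ℤ)+2 by ring, show ((p:ℤ)+1)-1 = (p:ℤ) by ring]
  rw [show ((-1:ℝ))^((p:ℤ)+2) = ((-1:ℝ))^(p:ℤ) by
        rw [zpow_add₀ (by norm_num : (-1:ℝ) ≠ 0)]; norm_num,
      show ((-1:ℝ))^((p:ℤ)+1) = -((-1:ℝ))^(p:ℤ) by
        rw [zpow_add₀ (by norm_num : (-1:ℝ) ≠ 0)]; norm_num]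
  rw [show (2*(p+1)+2 : ℕ).factorial = (2*p+4)*((2*p+3).factorial) by
        rw [show 2*(p+1)+2 = (2*p+3)+1 by ring, Nat.factorial_succ],
      show (2*(p+1) : ℕ).factorial = (2*p+2)*((2*p+1).factorial) by
        rw [show 2*(p+1) = (2*p+1)+1 by ring, Nat.factorial_succ],
      show (2*p+2 : ℕ).factorial = (2*p+2)*((2*p+1).factorial) by
        rw [show 2*p+2 = (2*p+1)+1 by ring, Nat.factorial_succ]]
  rw [show (2*(p+1)+2 : ℕ) = (2*(p+1)) + 2 by ring, pow_add]
  have h2 : ((2:ℝ))^(2*(p+1)) ≠ 0 := by positivity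
  have hs := neg_one_zpow_ne (p:ℤ)
  push_cast
  field_simp
  ring

lemma ccF_step_case_eq1 (n : ℕ) :
    ccF (2*n+2) ((n:ℤ)+1) = ccF (2*n) ((n:ℤ)+1) / 2
      - ccF (2*n) (((n:ℤ)+1)+1) / 4 - ccF (2*n) (((n:ℤ)+1)-1) / 4 := by
  have hfac2 : ((2*n+2).factorial : ℝ) ≠ 0 := Nat.cast_ne_zero.mpr (Nat.factorial_ne_zero _)
  have hfac0 : ((2*n).factorial : ℝ) ≠ 0 := Nat.cast_ne_zero.mpr (Nat.factorial_ne_zero _)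
  simp only [ccF]
  push_cast
  rw [show (2*(n:ℝ)+2)/2 - ((n:ℝ)+1) + 1 = 1 by ring,
      show (2*(n:ℝ)+2)/2 + ((n:ℝ)+1) + 1 = ((2*n+2:ℕ):ℝ)+1 by push_cast; ring,
      show (2*(n:ℝ))/2 - ((n:ℝ)+1) + 1 = 0 by ring,
      show (2*(n:ℝ))/2 - ((n:ℝ)+1+1) + 1 = -((1:ℕ):ℝ) by push_cast; ring,
      show (2*(n:ℝ))/2 - ((n:ℝ)+1-1) + 1 = 1 by ring,
      show (2*(n:ℝ))/2 + ((n:ℝ)+1-1) + 1 = ((2*n:ℕ):ℝ)+1 by push_cast; ring,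
      Real.Gamma_one, Real.Gamma_zero, Real.Gamma_neg_nat_eq_zero, Gamma_nat_fac, Gamma_nat_fac]
  rw [show ((n:ℤ)+1)-1 = (n:ℤ) by ring]
  rw [show ((-1:ℝ))^((n:ℤ)+1) = -((-1:ℝ))^(n:ℤ) by
        rw [zpow_add₀ (by norm_num : (-1:ℝ) ≠ 0)]; norm_num]
  rw [show (2*n+2 : ℕ).factorial = (2*n+2)*((2*n+1)*(2*n).factorial) by
        rw [show 2*n+2 = (2*n+1)+1 by ring, Nat.factorial_succ, Nat.factorial_succ],
      pow_add]
  have h2 : ((2:ℝ))^(2*n) ≠ 0 := by positivity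
  have hs := neg_one_zpow_ne (n:ℤ)
  push_cast
  field_simp
  ring

lemma neg_one_zpow_neg (m : ℤ) : ((-1:ℝ))^(-m) = (-1:ℝ)^m := by
  rw [zpow_neg]
  rcases Int.even_or_odd m with h | h
  · rw [h.neg_one_zpow]; norm_num
  · rw [h.neg_one_zpow]; norm_num

lemma ccF_neg (α : ℕ) (m : ℤ) : ccF α (-m) = ccF α m := by
  unfold ccF
  rw [neg_one_zpow_neg]
  rw [show (α:ℝ)/2 - (-m : ℤ) + 1 = (α:ℝ)/2 + m + 1 by push_cast; ring,
      show (α:ℝ)/2 + (-m : ℤ) + 1 = (α:ℝ)/2 - m + 1 by push_cast; ring,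
      mul_comm (Real.Gamma ((α:ℝ)/2 + m + 1))]

lemma ccF_step_aux (α : ℕ) (m : ℤ) (hm : 0 ≤ m) :
    ccF (α+2) m = ccF α m / 2 - ccF α (m+1) / 4 - ccF α (m-1) / 4 := by
  rcases Nat.even_or_odd α with ⟨t, ht⟩ | ⟨t, ht⟩
  · -- α = t + t
    subst ht
    have hcast : ((t+t:ℕ):ℝ)/2 = (t:ℝ) := by push_cast; ring
    rcases lt_trichotomy m t with hlt | heq | hgt
    · -- regular case : 0 ≤ m < t
      apply ccF_step_regular
      · rw [hcast]
        have : ((t:ℤ) - m : ℤ) ≠ 0 := by omega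
        intro h; apply this
        have : ((t:ℤ) - m : ℝ) = 0 := by push_cast; linarith
        exact_mod_cast this
      · rw [hcast]
        have : ((t:ℤ) - m + 1 : ℤ) ≠ 0 := by omega
        intro h; apply this
        have : ((t:ℤ) - m + 1 : ℝ) = 0 := by push_cast; linarith
        exact_mod_cast this
      · rw [hcast]
        have : ((t:ℤ) + m : ℤ) ≠ 0 := by omega
        intro h; apply this
        have : ((t:ℤ) + m : ℝ) = 0 := by push_cast; linarith
        exact_mod_cast this
      · rw [hcast]
        have : ((t:ℤ) + m + 1 : ℤ) ≠ 0 := by omega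
        intro h; apply this
        have : ((t:ℤ) + m + 1 : ℝ) = 0 := by push_cast; linarith
        exact_mod_cast this
      · rw [hcast]
        apply ne_of_gt
        apply Real.Gamma_pos_of_pos
        have h1 : (1:ℤ) ≤ (t:ℤ) - m := by omega
        have : (1:ℝ) ≤ (t:ℝ) - m := by exact_mod_cast h1
        linarith
      · rw [hcast]
        apply ne_of_gt
        apply Real.Gamma_pos_of_pos
        have h1 : (0:ℤ) < (t:ℤ) + m := by omega
        have : (0:ℝ) < ((t:ℤ) + m : ℤ) := by exact_mod_cast h1
        push_cast at this; linarith
    · -- m = t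
      rcases Nat.eq_zero_or_pos t with rfl | hpos
      · -- t = 0, m = 0
        have hm0 : m = 0 := by omega
        subst hm0
        norm_num [ccF, Real.Gamma_one, Real.Gamma_two, Real.Gamma_zero]
        ring
      · obtain ⟨p, rfl⟩ : ∃ p, t = p + 1 := ⟨t - 1, by omega⟩
        have hmval : m = (p:ℤ) + 1 := by omega
        subst hmval
        have h1 : (p+1) + (p+1) + 2 = 2*(p+1)+2 := by ring
        have h2 : (p+1) + (p+1) = 2*(p+1) := by ring
        rw [h1, h2]
        exact ccF_step_case_eq p
    · rcases eq_or_lt_of_le (show (t:ℤ)+1 ≤ m by omega) with heq1 | hgt2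
      · -- m = t + 1
        have hmval : m = (t:ℤ) + 1 := by omega
        subst hmval
        have h1 : t + t + 2 = 2*t+2 := by ring
        have h2 : t + t = 2*t := by ring
        rw [h1, h2]
        exact ccF_step_case_eq1 t
      · -- m ≥ t + 2 : everything vanishes
        have hz1 : ccF (t+t+2) m = 0 := by
          apply ccF_zero_left
          rw [show ((t+t+2:ℕ):ℝ)/2 - m + 1 = (((t:ℤ) - m + 2 : ℤ):ℝ) by push_cast; ring]
          exact Gamma_nonpos_int (by omega)
        have hz2 : ccF (t+t) m = 0 := by
          apply ccF_zero_left
          rw [show ((t+t:ℕ):ℝ)/2 - m + 1 = (((t:ℤ) - m + 1 : ℤ):ℝ) by push_cast; ring]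
          exact Gamma_nonpos_int (by omega)
        have hz3 : ccF (t+t) (m+1) = 0 := by
          apply ccF_zero_left
          rw [show ((t+t:ℕ):ℝ)/2 - (((m+1):ℤ):ℝ) + 1 = (((t:ℤ) - m : ℤ):ℝ) by push_cast; ring]
          exact Gamma_nonpos_int (by omega)
        have hz4 : ccF (t+t) (m-1) = 0 := by
          apply ccF_zero_left
          rw [show ((t+t:ℕ):ℝ)/2 - (((m-1):ℤ):ℝ) + 1 = (((t:ℤ) - m + 2 : ℤ):ℝ) by push_cast; ring]
          exact Gamma_nonpos_int (by omega)
        rw [hz1, hz2, hz3, hz4]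
        norm_num
  · -- α odd : α = 2t+1
    subst ht
    have hcast : ((2*t+1:ℕ):ℝ)/2 - m = (((t:ℤ) - m : ℤ):ℝ) + 1/2 := by push_cast; ring
    have hcast2 : ((2*t+1:ℕ):ℝ)/2 - m + 1 = (((t:ℤ) - m + 1 : ℤ):ℝ) + 1/2 := by push_cast; ring
    have hcast3 : ((2*t+1:ℕ):ℝ)/2 + m = (((t:ℤ) + m : ℤ):ℝ) + 1/2 := by push_cast; ring
    have hcast4 : ((2*t+1:ℕ):ℝ)/2 + m + 1 = (((t:ℤ) + m + 1 : ℤ):ℝ) + 1/2 := by push_cast; ring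
    apply ccF_step_regular
    · rw [hcast]; exact half_int_ne_zero _
    · rw [hcast2]; exact half_int_ne_zero _
    · rw [hcast3]; exact half_int_ne_zero _
    · rw [hcast4]; exact half_int_ne_zero _
    · rw [hcast]; exact Gamma_half_int_ne_zero _
    · rw [hcast3]; exact Gamma_half_int_ne_zero _

lemma ccF_step (α : ℕ) (m : ℤ) :
    ccF (α+2) m = ccF α m / 2 - ccF α (m+1) / 4 - ccF α (m-1) / 4 := by
  rcases le_or_gt 0 m with hm | hm
  · exact ccF_step_aux α m hm
  · have h := ccF_step_aux α (-m) (by omega)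
    rw [show -m + 1 = -(m-1) by ring, show -m - 1 = -(m+1) by ring,
        ccF_neg (α+2) m, ccF_neg α m, ccF_neg α (m-1), ccF_neg α (m+1)] at h
    linarith [h]

lemma int_cos_mul {a : ℝ} (ha : a ≠ 0) : ∫ θ in (0:ℝ)..π, Real.cos (a * θ) = Real.sin (a * π) / a := by
  have h := intervalIntegral.mul_integral_comp_mul_left (a := (0:ℝ)) (b := π) (c := a)
    (f := fun x => Real.cos x)
  rw [integral_cos] at h
  field_simp at h ⊢
  simpa using h

lemma int_sin_mul {a : ℝ} (ha : a ≠ 0) : ∫ θ in (0:ℝ)..π, Real.sin (a * θ) = (1 - Real.cos (a * π)) / a := by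
  have h := intervalIntegral.mul_integral_comp_mul_left (a := (0:ℝ)) (b := π) (c := a)
    (f := fun x => Real.sin x)
  rw [integral_sin] at h
  field_simp at h ⊢
  simpa using h

lemma trig_integrable (a : ℝ) (k : ℕ) :
    IntervalIntegrable (fun θ => Real.cos (a*θ) * Real.sin θ ^ k) MeasureTheory.volume 0 π :=
  (Continuous.mul (Real.continuous_cos.comp (continuous_const.mul continuous_id))
    ((Real.continuous_sin).pow k)).intervalIntegrable _ _

lemma base0 (m : ℤ) : (∫ θ in (0:ℝ)..π, Real.cos (2*m*θ) * Real.sin θ ^ 0) = ccF 0 m := by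
  simp only [pow_zero, mul_one]
  rcases eq_or_ne m 0 with rfl | hm
  · simp only [Int.cast_zero, mul_zero, zero_mul, Real.cos_zero]
    rw [intervalIntegral.integral_const]
    norm_num [ccF, Real.Gamma_one]
  · have ha : (2*(m:ℝ)) ≠ 0 := by
      intro h
      have : (m:ℝ) = 0 := by linarith
      exact hm (by exact_mod_cast this)
    have h := int_cos_mul ha
    simp only [mul_assoc] at h ⊢
    rw [h]
    have hs : Real.sin (2*((m:ℝ) * π)) = 0 := by
      rw [show 2*((m:ℝ)*π) = ((2*m : ℤ):ℝ) * π by push_cast; ring]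
      exact Real.sin_int_mul_pi _
    rw [hs, zero_div]
    symm
    rcases lt_or_gt_of_ne hm with hneg | hpos
    · simp only [ccF]
      rw [show ((0:ℕ):ℝ)/2 + m + 1 = ((m + 1 : ℤ):ℝ) by push_cast; ring,
        Gamma_nonpos_int (by omega), mul_zero, mul_zero, div_zero]
    · apply ccF_zero_left
      rw [show ((0:ℕ):ℝ)/2 - m + 1 = ((1 - m : ℤ):ℝ) by push_cast; ring]
      exact Gamma_nonpos_int (by omega)

lemma Gamma32_nat (p : ℕ) :
    Real.Gamma (3/2 - p) * Real.Gamma (3/2 + p) = (1/4 - (p:ℝ)^2) * π * (-1)^p := by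
  induction p with
  | zero =>
    norm_num
    rw [show (3/2 : ℝ) = 1/2 + 1 by norm_num, Real.Gamma_add_one (by norm_num),
      Real.Gamma_one_half_eq]
    rw [show 1/2*Real.sqrt π * (1/2*Real.sqrt π) = (Real.sqrt π * Real.sqrt π)/4 by ring,
      Real.mul_self_sqrt Real.pi_nonneg]
    ring
  | succ p ih =>
    have hne1 : (1/2 - (p:ℝ)) ≠ 0 := by
      rw [show (1/2 - (p:ℝ)) = ((-(p:ℤ) : ℤ):ℝ) + 1/2 by push_cast; ring]
      exact half_int_ne_zero _
    have hne2 : (3/2 + (p:ℝ)) ≠ 0 := by positivity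
    have g1 : Real.Gamma (3/2 - (p:ℝ)) = (1/2 - p) * Real.Gamma (1/2 - p) := by
      rw [show (3/2 - (p:ℝ)) = (1/2 - p) + 1 by ring]
      exact Real.Gamma_add_one hne1
    have g2 : Real.Gamma (3/2 + ((p:ℝ)+1)) = (3/2 + p) * Real.Gamma (3/2 + p) := by
      rw [show (3/2 + ((p:ℝ)+1)) = (3/2 + p) + 1 by ring]
      exact Real.Gamma_add_one hne2
    have key : Real.Gamma (1/2 - (p:ℝ)) = Real.Gamma (3/2 - p) / (1/2 - p) := by
      rw [g1, mul_div_cancel_left₀ _ hne1]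
    push_cast
    rw [show (3/2 - ((p:ℝ)+1)) = 1/2 - p by ring, g2, key, div_mul_eq_mul_div,
      div_eq_iff hne1]
    linear_combination ((3/2:ℝ) + p) * ih

lemma Gamma32 (m : ℤ) :
    Real.Gamma (3/2 - m) * Real.Gamma (3/2 + m) = (1/4 - (m:ℝ)^2) * π * (-1:ℝ)^m := by
  rcases le_or_gt 0 m with hm | hm
  · obtain ⟨p, rfl⟩ : ∃ p:ℕ, m = (p:ℤ) := ⟨m.toNat, by omega⟩
    rw [show ((p:ℤ):ℝ) = (p:ℝ) by push_cast; ring]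
    rw [show ((-1:ℝ))^((p:ℤ)) = (-1:ℝ)^(p:ℕ) by rw [zpow_natCast]]
    exact Gamma32_nat p
  · obtain ⟨p, rfl⟩ : ∃ p:ℕ, m = -(p:ℤ) := ⟨(-m).toNat, by omega⟩
    rw [show ((-(p:ℤ) : ℤ):ℝ) = -(p:ℝ) by push_cast; ring]
    rw [show (3/2 - -(p:ℝ)) = 3/2 + p by ring, show (3/2 + -(p:ℝ)) = 3/2 - p by ring,
      neg_one_zpow_neg, mul_comm (Real.Gamma (3/2 + (p:ℝ)))]
    rw [show ((-1:ℝ))^((p:ℤ)) = (-1:ℝ)^(p:ℕ) by rw [zpow_natCast]]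
    rw [show (-(p:ℝ))^2 = (p:ℝ)^2 by ring]
    exact Gamma32_nat p

lemma base1 (m : ℤ) : (∫ θ in (0:ℝ)..π, Real.cos (2*m*θ) * Real.sin θ ^ 1) = ccF 1 m := by
  have hA : (2*(m:ℝ)+1) ≠ 0 := by
    rw [show (2*(m:ℝ)+1) = ((2*m+1 : ℤ):ℝ) by push_cast; ring]
    exact_mod_cast (by omega : (2*m+1 : ℤ) ≠ 0)
  have hB : (2*(m:ℝ)-1) ≠ 0 := by
    rw [show (2*(m:ℝ)-1) = ((2*m-1 : ℤ):ℝ) by push_cast; ring]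
    exact_mod_cast (by omega : (2*m-1 : ℤ) ≠ 0)
  have point : ∀ θ ∈ Set.uIcc (0:ℝ) π, Real.cos (2*m*θ) * Real.sin θ ^ 1
      = (Real.sin ((2*(m:ℝ)+1)*θ) - Real.sin ((2*(m:ℝ)-1)*θ))/2 := by
    intro θ _
    rw [show (2*(m:ℝ)+1)*θ = 2*m*θ + θ by ring, show (2*(m:ℝ)-1)*θ = 2*m*θ - θ by ring,
      Real.sin_add, Real.sin_sub]
    ring
  rw [intervalIntegral.integral_congr point]
  have hi1 : IntervalIntegrable (fun θ => Real.sin ((2*(m:ℝ)+1)*θ)) MeasureTheory.volume 0 π :=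
    (Real.continuous_sin.comp (continuous_const.mul continuous_id)).intervalIntegrable _ _
  have hi2 : IntervalIntegrable (fun θ => Real.sin ((2*(m:ℝ)-1)*θ)) MeasureTheory.volume 0 π :=
    (Real.continuous_sin.comp (continuous_const.mul continuous_id)).intervalIntegrable _ _
  rw [show (fun θ => (Real.sin ((2*(m:ℝ)+1)*θ) - Real.sin ((2*(m:ℝ)-1)*θ))/2)
      = fun θ => (Real.sin ((2*(m:ℝ)+1)*θ) - Real.sin ((2*(m:ℝ)-1)*θ))/2 from rfl,
    intervalIntegral.integral_div, intervalIntegral.integral_sub hi1 hi2,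
    int_sin_mul hA, int_sin_mul hB]
  have hcA : Real.cos ((2*(m:ℝ)+1)*π) = -1 := by
    rw [show (2*(m:ℝ)+1)*π = (m:ℝ)*(2*π) + π by ring]
    exact_mod_cast Real.cos_int_mul_two_pi_add_pi m
  have hcB : Real.cos ((2*(m:ℝ)-1)*π) = -1 := by
    rw [show (2*(m:ℝ)-1)*π = ((m-1:ℤ):ℝ)*(2*π) + π by push_cast; ring]
    exact_mod_cast Real.cos_int_mul_two_pi_add_pi (m-1)
  rw [hcA, hcB]
  simp only [ccF]
  rw [show ((1:ℕ):ℝ)/2 - (m:ℝ) + 1 = 3/2 - m by push_cast; ring,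
      show ((1:ℕ):ℝ)/2 + (m:ℝ) + 1 = 3/2 + m by push_cast; ring,
      Gamma32 m]
  have hσ := neg_one_zpow_ne m
  have hπ : (π:ℝ) ≠ 0 := Real.pi_ne_zero
  rw [show (1/4 - (m:ℝ)^2) = -((2*(m:ℝ)+1)*(2*(m:ℝ)-1))/4 by ring]
  norm_num [Nat.factorial]
  field_simp
  ring

lemma intStep (α : ℕ) (n : ℤ) :
    (∫ θ in (0:ℝ)..π, Real.cos (n*θ) * Real.sin θ ^ (α+2))
      = (∫ θ in (0:ℝ)..π, Real.cos (n*θ) * Real.sin θ ^ α)/2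
        - (∫ θ in (0:ℝ)..π, Real.cos ((n+2:ℤ)*θ) * Real.sin θ ^ α)/4
        - (∫ θ in (0:ℝ)..π, Real.cos ((n-2:ℤ)*θ) * Real.sin θ ^ α)/4 := by
  have point : ∀ θ ∈ Set.uIcc (0:ℝ) π, Real.cos (n*θ) * Real.sin θ ^ (α+2)
      = Real.cos (n*θ) * Real.sin θ ^ α/2 - Real.cos ((n+2:ℤ)*θ) * Real.sin θ ^ α/4
        - Real.cos ((n-2:ℤ)*θ) * Real.sin θ ^ α/4 := by
    intro θ _
    have c1 : Real.cos (((n+2:ℤ):ℝ)*θ)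
        = Real.cos (n*θ)*Real.cos (2*θ) - Real.sin (n*θ)*Real.sin (2*θ) := by
      rw [show ((n+2:ℤ):ℝ)*θ = (n:ℝ)*θ + 2*θ by push_cast; ring, Real.cos_add]
    have c2 : Real.cos (((n-2:ℤ):ℝ)*θ)
        = Real.cos (n*θ)*Real.cos (2*θ) + Real.sin (n*θ)*Real.sin (2*θ) := by
      rw [show ((n-2:ℤ):ℝ)*θ = (n:ℝ)*θ - 2*θ by push_cast; ring, Real.cos_sub]
    rw [pow_add, c1, c2, Real.cos_two_mul]
    have pyth := Real.sin_sq_add_cos_sq θ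
    linear_combination (Real.cos ((n:ℝ)*θ) * Real.sin θ^α) * pyth
  rw [intervalIntegral.integral_congr point]
  have h1 := trig_integrable (n:ℝ) α
  have h2 := trig_integrable ((n+2:ℤ):ℝ) α
  have h3 := trig_integrable ((n-2:ℤ):ℝ) α
  rw [intervalIntegral.integral_sub ((h1.div_const 2).sub (h2.div_const 4)) (h3.div_const 4),
      intervalIntegral.integral_sub (h1.div_const 2) (h2.div_const 4),
      intervalIntegral.integral_div, intervalIntegral.integral_div,
      intervalIntegral.integral_div]

lemma Bmain (α : ℕ) : ∀ m : ℤ, (∫ θ in (0:ℝ)..π, Real.cos (2*m*θ) * Real.sin θ ^ α) = ccF α m := by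
  induction α using Nat.twoStepInduction with
  | zero => exact base0
  | one => exact base1
  | more α ih ih1 =>
    intro m
    have hs := intStep α (2*m)
    rw [show (2*m+2 : ℤ) = 2*(m+1) by ring, show (2*m-2 : ℤ) = 2*(m-1) by ring] at hs
    have e1 : ∀ k : ℤ, (∫ θ in (0:ℝ)..π, Real.cos (((2*k : ℤ):ℝ)*θ) * Real.sin θ ^ α)
        = (∫ θ in (0:ℝ)..π, Real.cos (2*(k:ℝ)*θ) * Real.sin θ ^ α) := by
      intro k
      apply intervalIntegral.integral_congr
      intro θ _
      simp only []
      rw [show ((2*k:ℤ):ℝ)*θ = 2*(k:ℝ)*θ by push_cast; ring]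
    have e2 : (∫ θ in (0:ℝ)..π, Real.cos (((2*m : ℤ):ℝ)*θ) * Real.sin θ ^ (α+2))
        = (∫ θ in (0:ℝ)..π, Real.cos (2*(m:ℝ)*θ) * Real.sin θ ^ (α+2)) := by
      apply intervalIntegral.integral_congr
      intro θ _
      simp only []
      rw [show ((2*m:ℤ):ℝ)*θ = 2*(m:ℝ)*θ by push_cast; ring]
    rw [e2] at hs
    rw [e1 m, e1 (m+1), e1 (m-1)] at hs
    rw [hs, ih m, ih (m+1), ih (m-1), ccF_step]


lemma cos_pow_expand (k : ℕ) (t : ℝ) :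
    (Real.cos t)^k = ∑ j ∈ Finset.range (k+1),
      ((k.choose j : ℝ)/2^k) * Real.cos (((((k:ℤ) - 2*j) : ℤ):ℝ)*t) := by
  set S := ∑ j ∈ Finset.range (k+1),
    (k.choose j : ℂ) * Complex.exp ((2*(j:ℂ) - k) * ((t:ℂ)*Complex.I)) with hS_def
  have hreflect : S = ∑ j ∈ Finset.range (k+1),
      (k.choose j : ℂ) * Complex.exp (((k:ℂ) - 2*j) * ((t:ℂ)*Complex.I)) := by
    rw [hS_def, ← Finset.sum_range_reflect]
    apply Finset.sum_congr rfl
    intro j hj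
    have hjk : j ≤ k := by simp only [Finset.mem_range] at hj; omega
    rw [show k+1-1-j = k-j by omega, Nat.choose_symm hjk]
    congr 2
    push_cast [Nat.cast_sub hjk]
    ring
  have hcosS : S = ∑ j ∈ Finset.range (k+1),
      (k.choose j : ℂ) * Complex.cos (((k:ℂ) - 2*j) * t) := by
    have h2 : (2:ℂ) * S = S + S := two_mul S
    nth_rewrite 3 [hreflect] at h2
    rw [hS_def, ← Finset.sum_add_distrib] at h2
    have h3 : (2:ℂ) * S = ∑ j ∈ Finset.range (k+1),
        (2:ℂ) * ((k.choose j : ℂ) * Complex.cos (((k:ℂ) - 2*j) * t)) := by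
      rw [h2]
      apply Finset.sum_congr rfl
      intro j _
      rw [show (2*(j:ℂ) - k) * ((t:ℂ)*Complex.I) = -(((k:ℂ) - 2*j)*t) * Complex.I by ring,
          show ((k:ℂ) - 2*(j:ℂ)) * ((t:ℂ)*Complex.I) = (((k:ℂ) - 2*j)*t) * Complex.I by ring,
          ]
      linear_combination -(k.choose j : ℂ) * Complex.two_cos (((k:ℂ) - 2*j)*t)
    rw [← Finset.mul_sum] at h3
    exact mul_left_cancel₀ two_ne_zero h3
  -- now the main computation
  have he : Complex.exp ((t:ℂ)*Complex.I) ≠ 0 := Complex.exp_ne_zero _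
  have hcos : ((Real.cos t : ℝ):ℂ) = (Complex.exp ((t:ℂ)*Complex.I) + (Complex.exp ((t:ℂ)*Complex.I))⁻¹)/2 := by
    have h2 := Complex.two_cos (t:ℂ)
    rw [neg_mul, Complex.exp_neg] at h2
    rw [Complex.ofReal_cos]
    linear_combination h2/2
  have main : ((Real.cos t : ℝ):ℂ)^k = ∑ j ∈ Finset.range (k+1),
      ((k.choose j : ℂ)/2^k) * Complex.cos (((k:ℂ) - 2*j) * t) := by
    rw [hcos, div_pow, add_pow]
    rw [show (∑ j ∈ Finset.range (k+1), Complex.exp ((t:ℂ)*Complex.I)^j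
          * ((Complex.exp ((t:ℂ)*Complex.I))⁻¹)^(k-j) * (k.choose j : ℂ)) = S by
      rw [hS_def]
      apply Finset.sum_congr rfl
      intro j hj
      have hjk : j ≤ k := by simp only [Finset.mem_range] at hj; omega
      rw [inv_pow, ← Complex.exp_nat_mul, ← Complex.exp_nat_mul, ← Complex.exp_neg,
        ← Complex.exp_add]
      rw [show ((j:ℂ)*((t:ℂ)*Complex.I) + -(((k-j:ℕ):ℂ)*((t:ℂ)*Complex.I))) = (((j:ℂ) - ((k-j:ℕ):ℂ))*((t:ℂ)*Complex.I)) by ring]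
      rw [mul_comm]
      congr 2
      push_cast [Nat.cast_sub hjk]
      ring]
    rw [hcosS, Finset.sum_div]
    apply Finset.sum_congr rfl
    intro j _
    ring
  rw [← Complex.ofReal_inj]
  push_cast [Complex.ofReal_cos] at main ⊢
  rw [main]

lemma odd_vanish (α : ℕ) (t : ℤ) :
    (∫ θ in (0:ℝ)..π, Real.cos (((2*t+1 : ℤ):ℝ)*θ) * Real.sin θ ^ α) = 0 := by
  set c : ℝ := ((2*t+1 : ℤ):ℝ) with hc
  have hcπ : Real.cos (c*π) = -1 := by
    rw [show c*π = (t:ℝ)*(2*π) + π by rw [hc]; push_cast; ring]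
    exact_mod_cast Real.cos_int_mul_two_pi_add_pi t
  have hsπ : Real.sin (c*π) = 0 := by
    rw [show c*π = ((2*t+1:ℤ):ℝ)*π from by rw [hc]]
    exact Real.sin_int_mul_pi _
  have h := intervalIntegral.integral_comp_sub_left (a := (0:ℝ)) (b := π)
    (fun θ => Real.cos (c*θ) * Real.sin θ ^ α) π
  simp only [sub_self, sub_zero] at h
  have e : (∫ x in (0:ℝ)..π, Real.cos (c*(π - x)) * Real.sin (π - x) ^ α)
      = ∫ x in (0:ℝ)..π, -(Real.cos (c*x) * Real.sin x ^ α) := by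
    apply intervalIntegral.integral_congr
    intro x _
    simp only []
    rw [show c*(π-x) = c*π - c*x by ring, Real.cos_sub, hcπ, hsπ, Real.sin_pi_sub]
    ring
  rw [e, intervalIntegral.integral_neg] at h
  linarith [h]

lemma eps_cos_prod (M : ℕ) (hM : 1 ≤ M) (j n : ℤ) :
    ∑ u ∈ Finset.range (M+1), ccEps M u * (Real.cos (j*u*π/M) * Real.cos (n*u*π/M))
      = ((if (2*(M:ℤ)) ∣ (j+n) then (M:ℝ) else 0)
          + (if (2*(M:ℤ)) ∣ (j-n) then (M:ℝ) else 0))/2 := by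
  have congr1 : ∀ u ∈ Finset.range (M+1),
      ccEps M u * (Real.cos (j*u*π/M) * Real.cos (n*u*π/M))
      = (ccEps M u * Real.cos (((j+n:ℤ):ℝ)*u*π/M)
          + ccEps M u * Real.cos (((j-n:ℤ):ℝ)*u*π/M))/2 := by
    intro u _
    have key : Real.cos ((j:ℝ)*u*π/M) * Real.cos ((n:ℝ)*u*π/M)
        = (Real.cos (((j+n:ℤ):ℝ)*u*π/M) + Real.cos (((j-n:ℤ):ℝ)*u*π/M))/2 := by
      rw [show ((j+n:ℤ):ℝ)*u*π/M = (j:ℝ)*u*π/M + (n:ℝ)*u*π/M by push_cast; ring,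
          show ((j-n:ℤ):ℝ)*u*π/M = (j:ℝ)*u*π/M - (n:ℝ)*u*π/M by push_cast; ring,
          Real.cos_add, Real.cos_sub]
      ring
    rw [key]
    ring
  rw [Finset.sum_congr rfl congr1, ← Finset.sum_div, Finset.sum_add_distrib,
    eps_cos_sum M hM (j+n), eps_cos_sum M hM (j-n)]

lemma not_dvd_small {D x : ℤ} (hD : 0 < D) (hx : x ≠ 0) (h1 : -D < x) (h2 : x < D) :
    ¬ D ∣ x := by
  intro h
  rcases lt_trichotomy x 0 with hs | hs | hs
  · have := Int.le_of_dvd (by omega) (dvd_neg.mpr h)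
    omega
  · exact hx hs
  · have := Int.le_of_dvd hs h
    omega

lemma rhs_eval (M α : ℕ) (hM : 1 ≤ M) (hα : 1 ≤ α) (n : ℕ) (hn : n ≤ M) :
    ∑ u ∈ Finset.range (M+1), (ccEps M u * ccOmega M α u) * Real.cos ((n:ℝ)*u*π/M)
      = (∫ θ in (0:ℝ)..π, Real.cos ((n:ℝ)*θ) * Real.sin θ ^ α) := by
  have hM0 : (M:ℝ) ≠ 0 := Nat.cast_ne_zero.mpr (by omega)
  set P : ℝ := π * (Nat.factorial α) / (2 ^ (α - 1) * M) with hP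
  set G : ℕ → ℝ := fun μ => Real.Gamma ((α : ℝ) / 2 - μ + 1) * Real.Gamma ((α : ℝ) / 2 + μ + 1)
    with hG
  -- Step 1: swap the sums
  have swap : ∑ u ∈ Finset.range (M+1), (ccEps M u * ccOmega M α u) * Real.cos ((n:ℝ)*u*π/M)
      = ∑ μ ∈ Finset.range (M/2 + 1), P * (ccEps M (2*μ) * (-1:ℝ)^μ / G μ)
          * (∑ u ∈ Finset.range (M+1),
              ccEps M u * (Real.cos (((2*μ:ℤ):ℝ)*u*π/M) * Real.cos ((n:ℝ)*u*π/M))) := by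
    have e1 : ∀ u ∈ Finset.range (M+1),
        (ccEps M u * ccOmega M α u) * Real.cos ((n:ℝ)*u*π/M)
        = ∑ μ ∈ Finset.range (M/2 + 1), P * (ccEps M (2*μ) * (-1:ℝ)^μ / G μ)
            * (ccEps M u * (Real.cos (((2*μ:ℤ):ℝ)*u*π/M) * Real.cos ((n:ℝ)*u*π/M))) := by
      intro u _
      rw [ccOmega, ← hP, Finset.mul_sum, Finset.mul_sum, Finset.sum_mul]
      apply Finset.sum_congr rfl
      intro μ _
      rw [show ((2*μ:ℤ):ℝ)*u*π/M = 2*(μ:ℝ)*u*π/M by push_cast; ring]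
      simp only [hG]
      ring
    rw [Finset.sum_congr rfl e1, Finset.sum_comm]
    apply Finset.sum_congr rfl
    intro μ _
    rw [← Finset.mul_sum]
  rw [swap]
  rcases Nat.even_or_odd n with ⟨m, hm⟩ | ⟨m, hm⟩
  · -- even case : n = m + m
    have hm2 : 2*m ≤ M := by omega
    have hmM2 : m ≤ M/2 := by omega
    have key : ∀ μ ∈ Finset.range (M/2 + 1),
        P * (ccEps M (2*μ) * (-1:ℝ)^μ / G μ)
          * (∑ u ∈ Finset.range (M+1),
              ccEps M u * (Real.cos (((2*μ:ℤ):ℝ)*u*π/M) * Real.cos ((n:ℝ)*u*π/M)))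
        = if μ = m then P * ((-1:ℝ)^m * ((M:ℝ)/2) / G m) else 0 := by
      intro μ hμ
      have hμM : 2*μ ≤ M := by
        simp only [Finset.mem_range] at hμ
        omega
      rw [show (fun u : ℕ => ccEps M u * (Real.cos (((2*μ:ℤ):ℝ)*u*π/M)
            * Real.cos ((n:ℝ)*u*π/M)))
          = fun u : ℕ => ccEps M u * (Real.cos (((2*μ:ℤ):ℝ)*u*π/M)
            * Real.cos (((n:ℤ):ℝ)*u*π/M)) from by
          funext u; push_cast; ring_nf]
      rw [eps_cos_prod M hM (2*μ) n]
      by_cases hμm : μ = m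
      · subst hμm
        have hd2 : (2*(M:ℤ)) ∣ (2*(μ:ℤ) - (n:ℤ)) := by
          rw [show (2*(μ:ℤ) - (n:ℤ)) = 0 by omega]
          exact dvd_zero _
        rw [if_pos rfl, if_pos hd2]
        by_cases hc : 2*μ = 0 ∨ 2*μ = M
        · have hd1 : (2*(M:ℤ)) ∣ (2*(μ:ℤ) + (n:ℤ)) := by
            rcases hc with hc | hc
            · rw [show (2*(μ:ℤ) + (n:ℤ)) = 0 by omega]; exact dvd_zero _
            · refine ⟨1, by omega⟩
          rw [if_pos hd1, ccEps, if_pos hc]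
          ring
        · push_neg at hc
          have hd1 : ¬ (2*(M:ℤ)) ∣ (2*(μ:ℤ) + (n:ℤ)) := by
            apply not_dvd_small (by omega) (by omega) (by omega) (by omega)
          rw [if_neg hd1, ccEps, if_neg (by omega : ¬ (2*μ = 0 ∨ 2*μ = M))]
          ring
      · have hd1 : ¬ (2*(M:ℤ)) ∣ (2*(μ:ℤ) + (n:ℤ)) := by
          apply not_dvd_small (by omega) (by omega) (by omega) (by omega)
        have hd2 : ¬ (2*(M:ℤ)) ∣ (2*(μ:ℤ) - (n:ℤ)) := by
          apply not_dvd_small (by omega) (by omega) (by omega) (by omega)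
        rw [if_neg hμm, if_neg hd1, if_neg hd2]
        norm_num
    rw [Finset.sum_congr rfl key, Finset.sum_ite_eq' (Finset.range (M/2+1)) m,
      if_pos (by simp only [Finset.mem_range]; omega)]
    -- integral side
    have hint : (∫ θ in (0:ℝ)..π, Real.cos ((n:ℝ)*θ) * Real.sin θ ^ α) = ccF α m := by
      rw [show (∫ θ in (0:ℝ)..π, Real.cos ((n:ℝ)*θ) * Real.sin θ ^ α)
          = ∫ θ in (0:ℝ)..π, Real.cos (2*((m:ℤ):ℝ)*θ) * Real.sin θ ^ α from by
        apply intervalIntegral.integral_congr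
        intro θ _
        simp only []
        rw [show ((n:ℝ))*θ = 2*((m:ℤ):ℝ)*θ by push_cast [hm]; ring]]
      exact Bmain α m
    rw [hint, ccF]
    have hM2 : ((M:ℝ)/2) ≠ 0 := by
      intro h
      apply hM0
      linarith
    have hp2 : (2:ℝ)^α = 2*2^(α-1) := by
      rw [← pow_succ']
      congr 1
      omega
    rw [hG, hP]
    simp only []
    rw [div_mul_div_comm]
    rw [show π * ↑(Nat.factorial α) * ((-1:ℝ)^m * ((M:ℝ)/2))
        = ((M:ℝ)/2) * (π * ↑(Nat.factorial α) * (-1:ℝ)^m) by ring]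
    rw [show (2:ℝ)^(α-1) * (M:ℝ) * (Real.Gamma ((α : ℝ) / 2 - m + 1)
          * Real.Gamma ((α : ℝ) / 2 + m + 1))
        = ((M:ℝ)/2) * (2^α * (Real.Gamma ((α : ℝ) / 2 - m + 1)
          * Real.Gamma ((α : ℝ) / 2 + m + 1))) by rw [hp2]; ring]
    rw [mul_div_mul_left _ _ hM2]
    rw [show ((-1:ℝ))^((m:ℤ)) = (-1:ℝ)^(m:ℕ) from by rw [zpow_natCast]]
    norm_num
  · -- odd case : n = 2*m + 1
    have key : ∀ μ ∈ Finset.range (M/2 + 1),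
        P * (ccEps M (2*μ) * (-1:ℝ)^μ / G μ)
          * (∑ u ∈ Finset.range (M+1),
              ccEps M u * (Real.cos (((2*μ:ℤ):ℝ)*u*π/M) * Real.cos ((n:ℝ)*u*π/M)))
        = 0 := by
      intro μ _
      rw [show (fun u : ℕ => ccEps M u * (Real.cos (((2*μ:ℤ):ℝ)*u*π/M)
            * Real.cos ((n:ℝ)*u*π/M)))
          = fun u : ℕ => ccEps M u * (Real.cos (((2*μ:ℤ):ℝ)*u*π/M)
            * Real.cos (((n:ℤ):ℝ)*u*π/M)) from by
          funext u; push_cast; ring_nf]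
      rw [eps_cos_prod M hM (2*μ) n]
      have hd1 : ¬ (2*(M:ℤ)) ∣ (2*(μ:ℤ) + (n:ℤ)) := by
        intro h
        obtain ⟨c, hc2⟩ : (2:ℤ) ∣ (2*(μ:ℤ) + (n:ℤ)) := dvd_trans ⟨(M:ℤ), by ring⟩ h
        omega
      have hd2 : ¬ (2*(M:ℤ)) ∣ (2*(μ:ℤ) - (n:ℤ)) := by
        intro h
        obtain ⟨c, hc2⟩ : (2:ℤ) ∣ (2*(μ:ℤ) - (n:ℤ)) := dvd_trans ⟨(M:ℤ), by ring⟩ h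
        omega
      rw [if_neg hd1, if_neg hd2]
      norm_num
    rw [Finset.sum_congr rfl key, Finset.sum_const, smul_zero]
    have hodd : (∫ θ in (0:ℝ)..π, Real.cos ((n:ℝ)*θ) * Real.sin θ ^ α) = 0 := by
      rw [show (∫ θ in (0:ℝ)..π, Real.cos ((n:ℝ)*θ) * Real.sin θ ^ α)
          = ∫ θ in (0:ℝ)..π, Real.cos (((2*(m:ℤ)+1 : ℤ):ℝ)*θ) * Real.sin θ ^ α from by
        apply intervalIntegral.integral_congr
        intro θ _
        simp only []
        rw [show ((n:ℝ))*θ = ((2*(m:ℤ)+1 : ℤ):ℝ)*θ by push_cast [hm]; ring]]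
      exact odd_vanish α m
    rw [hodd]

lemma quad_int (M α : ℕ) (hM : 1 ≤ M) (hα : 1 ≤ α) (k : ℤ) (hk : k.natAbs ≤ M) :
    (∫ θ in (0:ℝ)..π, Real.cos ((k:ℝ)*θ) * Real.sin θ ^ α)
      = ∑ u ∈ Finset.range (M+1),
          (ccEps M u * ccOmega M α u) * Real.cos ((k:ℝ)*u*π/M) := by
  rcases le_or_gt 0 k with hk0 | hk0
  · obtain ⟨n, rfl⟩ : ∃ n:ℕ, k = (n:ℤ) := ⟨k.toNat, by omega⟩
    have hn : n ≤ M := by omega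
    have := (rhs_eval M α hM hα n hn).symm
    push_cast at this ⊢
    exact this
  · obtain ⟨n, rfl⟩ : ∃ n:ℕ, k = -(n:ℤ) := ⟨(-k).toNat, by omega⟩
    have hn : n ≤ M := by omega
    have base := (rhs_eval M α hM hα n hn).symm
    have eL : (∫ θ in (0:ℝ)..π, Real.cos (((-(n:ℤ) : ℤ):ℝ)*θ) * Real.sin θ ^ α)
        = (∫ θ in (0:ℝ)..π, Real.cos ((n:ℝ)*θ) * Real.sin θ ^ α) := by
      apply intervalIntegral.integral_congr
      intro θ _
      simp only []
      rw [show ((-(n:ℤ) : ℤ):ℝ)*θ = -((n:ℝ)*θ) by push_cast; ring, Real.cos_neg]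
    have eR : ∑ u ∈ Finset.range (M+1),
          (ccEps M u * ccOmega M α u) * Real.cos (((-(n:ℤ) : ℤ):ℝ)*u*π/M)
        = ∑ u ∈ Finset.range (M+1),
          (ccEps M u * ccOmega M α u) * Real.cos ((n:ℝ)*u*π/M) := by
      apply Finset.sum_congr rfl
      intro u _
      rw [show ((-(n:ℤ) : ℤ):ℝ)*u*π/M = -((n:ℝ)*u*π/M) by push_cast; ring, Real.cos_neg]
    rw [eL, eR]
    exact base

lemma quad_mono (M α : ℕ) (hM : 1 ≤ M) (hα : 1 ≤ α) (k : ℕ) (hk : k ≤ M) :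
    (∫ θ in (0:ℝ)..π, (Real.cos θ)^k * Real.sin θ ^ α)
      = ∑ u ∈ Finset.range (M+1),
          (ccEps M u * ccOmega M α u) * (Real.cos ((u:ℝ)*π/M))^k := by
  have hfun : (fun θ => (Real.cos θ)^k * Real.sin θ ^ α)
      = fun θ => ∑ j ∈ Finset.range (k+1),
          ((k.choose j : ℝ)/2^k) * (Real.cos (((((k:ℤ) - 2*j) : ℤ):ℝ)*θ) * Real.sin θ ^ α) := by
    funext θ
    rw [cos_pow_expand k θ, Finset.sum_mul]
    apply Finset.sum_congr rfl
    intro j _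
    ring
  rw [hfun, intervalIntegral.integral_finset_sum (fun (j : ℕ) _ =>
    ((trig_integrable ((((k:ℤ) - 2*j) : ℤ):ℝ) α).const_mul ((k.choose j : ℝ)/2^k)))]
  have hterm : ∀ j ∈ Finset.range (k+1),
      (∫ θ in (0:ℝ)..π, ((k.choose j : ℝ)/2^k)
          * (Real.cos (((((k:ℤ) - 2*j) : ℤ):ℝ)*θ) * Real.sin θ ^ α))
      = ((k.choose j : ℝ)/2^k) * ∑ u ∈ Finset.range (M+1),
          (ccEps M u * ccOmega M α u) * Real.cos (((((k:ℤ) - 2*j) : ℤ):ℝ)*u*π/M) := by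
    intro j hj
    have hjk : j ≤ k := by simp only [Finset.mem_range] at hj; omega
    rw [intervalIntegral.integral_const_mul,
      quad_int M α hM hα ((k:ℤ) - 2*j) (by omega)]
  rw [Finset.sum_congr rfl hterm]
  have swap : ∑ j ∈ Finset.range (k+1), ((k.choose j : ℝ)/2^k) * ∑ u ∈ Finset.range (M+1),
        (ccEps M u * ccOmega M α u) * Real.cos (((((k:ℤ) - 2*j) : ℤ):ℝ)*u*π/M)
      = ∑ u ∈ Finset.range (M+1), (ccEps M u * ccOmega M α u) *
          ∑ j ∈ Finset.range (k+1),
            ((k.choose j : ℝ)/2^k) * Real.cos (((((k:ℤ) - 2*j) : ℤ):ℝ)*u*π/M) := by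
    simp_rw [Finset.mul_sum]
    rw [Finset.sum_comm]
    apply Finset.sum_congr rfl
    intro u _
    apply Finset.sum_congr rfl
    intro j _
    ring
  rw [swap]
  apply Finset.sum_congr rfl
  intro u _
  congr 1
  rw [cos_pow_expand k ((u:ℝ)*π/M)]
  apply Finset.sum_congr rfl
  intro j _
  congr 2
  ring

theorem generalized_clenshaw_curtis (M α : ℕ) (hM : 1 ≤ M) (hα : 1 ≤ α)
    (f : Polynomial ℝ) (hf : f.natDegree ≤ M) :
    ∫ θ in (0 : ℝ)..π, f.eval (Real.cos θ) * (Real.sin θ) ^ α =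
      ∑ u ∈ Finset.range (M + 1),
        (ccEps M u * ccOmega M α u) * f.eval (Real.cos (u * π / M)) := by
  have hdeg : f.natDegree < M + 1 := by omega
  have heval : ∀ x:ℝ, f.eval x = ∑ k ∈ Finset.range (M+1), f.coeff k * x^k :=
    fun x => Polynomial.eval_eq_sum_range' hdeg x
  have hfun : (fun θ => f.eval (Real.cos θ) * Real.sin θ ^ α)
      = fun θ => ∑ k ∈ Finset.range (M+1),
          f.coeff k * ((Real.cos θ)^k * Real.sin θ ^ α) := by
    funext θ
    rw [heval (Real.cos θ), Finset.sum_mul]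
    apply Finset.sum_congr rfl
    intro k _
    ring
  rw [hfun, intervalIntegral.integral_finset_sum
    (f := fun k θ => f.coeff k * ((Real.cos θ)^k * Real.sin θ ^ α)) (fun k _ =>
    (((Real.continuous_cos.pow k).mul
      (Real.continuous_sin.pow α)).intervalIntegrable _ _).const_mul (f.coeff k))]
  have hterm : ∀ k ∈ Finset.range (M+1),
      (∫ θ in (0:ℝ)..π, f.coeff k * ((Real.cos θ)^k * Real.sin θ ^ α))
      = f.coeff k * ∑ u ∈ Finset.range (M+1),
          (ccEps M u * ccOmega M α u) * (Real.cos ((u:ℝ)*π/M))^k := by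
    intro k hk
    have hkM : k ≤ M := by simp only [Finset.mem_range] at hk; omega
    rw [intervalIntegral.integral_const_mul, quad_mono M α hM hα k hkM]
  rw [Finset.sum_congr rfl hterm]
  have swap : ∑ k ∈ Finset.range (M+1), f.coeff k * ∑ u ∈ Finset.range (M+1),
        (ccEps M u * ccOmega M α u) * (Real.cos ((u:ℝ)*π/M))^k
      = ∑ u ∈ Finset.range (M+1), (ccEps M u * ccOmega M α u) *
          ∑ k ∈ Finset.range (M+1), f.coeff k * (Real.cos ((u:ℝ)*π/M))^k := by
    simp_rw [Finset.mul_sum]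
    rw [Finset.sum_comm]
    apply Finset.sum_congr rfl
    intro u _
    apply Finset.sum_congr rfl
    intro k _
    ring
  rw [swap]
  apply Finset.sum_congr rfl
  intro u _
  rw [← heval]
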